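/- Every club (closed and unbounded) proper class of ordinals that is Σ_n definable without parameters contains the class C^(n); that is, if 𝒞 is a Σ_n definable club proper class of ordinals and α ∈ C^(n), then α ∈ 𝒞. -/

import Mathlib

/-!  Common framework: the language of set theory, Lévy hierarchy,
Σₙ-elementarity of classes of `ZFSet`s, cumulative hierarchy, etc. -/

open FirstOrder

/-- The language of set theory: a single binary relation symbol (membership). -/
def LSet : FirstOrder.Language where
  Functions _ := Empty
  Relations n := match n with
    | 2 => Unit
    | _ => Empty

/-- `V` (the universe of ZFC sets) as an `LSet`-structure. -/
noncomputable instance : LSet.Structure ZFSet where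
  funMap := fun f _ => f.elim
  RelMap := fun {n} r xs => match n, r, xs with
    | 2, _, xs => xs 0 ∈ xs 1
    | 0, r, _ => r.elim
    | 1, r, _ => r.elim
    | _+3, r, _ => r.elim

/-- Any class of sets as an `LSet`-structure, with the inherited membership relation. -/
noncomputable instance (S : Set ZFSet) : LSet.Structure S where
  funMap := fun f _ => f.elim
  RelMap := fun {n} r xs => match n, r, xs with
    | 2, _, xs => (xs 0 : ZFSet) ∈ (xs 1 : ZFSet)
    | 0, r, _ => r.elim
    | 1, r, _ => r.elim
    | _+3, r, _ => r.elim

mutual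
  /-- The Σₙ formulas of the Lévy-style prenex hierarchy. -/
  inductive IsSigmaFml : ℕ → ∀ {k : ℕ}, LSet.BoundedFormula Empty k → Prop
    | of_qf {k} {φ : LSet.BoundedFormula Empty k} : φ.IsQF → IsSigmaFml 0 φ
    | of_pi {n k} {φ : LSet.BoundedFormula Empty k} : IsPiFml n φ → IsSigmaFml (n+1) φ
    | ex {n k} {φ : LSet.BoundedFormula Empty (k+1)} :
        IsSigmaFml (n+1) φ → IsSigmaFml (n+1) φ.ex
  /-- The Πₙ formulas of the Lévy-style prenex hierarchy. -/
  inductive IsPiFml : ℕ → ∀ {k : ℕ}, LSet.BoundedFormula Empty k → Prop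
    | of_qf {k} {φ : LSet.BoundedFormula Empty k} : φ.IsQF → IsPiFml 0 φ
    | of_sigma {n k} {φ : LSet.BoundedFormula Empty k} : IsSigmaFml n φ → IsPiFml (n+1) φ
    | all {n k} {φ : LSet.BoundedFormula Empty (k+1)} :
        IsPiFml (n+1) φ → IsPiFml (n+1) φ.all
end

/-- Satisfaction of a formula (with `k` parameters) in `V`. -/
def SatV {k : ℕ} (φ : LSet.BoundedFormula Empty k) (xs : Fin k → ZFSet) : Prop :=
  φ.Realize (fun e => e.elim) xs

/-- Satisfaction of a formula (with `k` parameters) in a class `S` of sets. -/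
def SatIn (S : Set ZFSet) {k : ℕ} (φ : LSet.BoundedFormula Empty k) (xs : Fin k → S) : Prop :=
  φ.Realize (fun e => e.elim) xs

/-- `S ≼ₙ V` : Σₙ formulas with parameters in `S` are absolute between `S` and `V`. -/
def SigmaElementary (n : ℕ) (S : Set ZFSet) : Prop :=
  ∀ {k : ℕ} (φ : LSet.BoundedFormula Empty k), IsSigmaFml n φ →
    ∀ xs : Fin k → S, (SatIn S φ xs ↔ SatV φ (fun i => (xs i : ZFSet)))

/-- The cumulative hierarchy `V_α`, as the class of sets of rank `< α`. -/
def Vset (α : Ordinal) : Set ZFSet := {x | x.rank < α}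

universe u

/-- `H_κ`: the class of sets hereditarily of cardinality `< κ`. -/
def Hset (κ : Cardinal.{u}) : Set ZFSet.{u} :=
  {x | ∃ t : ZFSet, t.IsTransitive ∧ x ⊆ t ∧ Cardinal.mk t.toSet < Cardinal.lift.{u+1} κ}

/-- The class `C⁽ⁿ⁾ = {α : V_α ≼ₙ V}`. -/
def Cclass (n : ℕ) : Set Ordinal := {α | SigmaElementary n (Vset α)}

/-- `x` is a (von Neumann) ordinal: a transitive set of transitive sets. -/
def ZFOrd (x : ZFSet) : Prop := x.IsTransitive ∧ ∀ y ∈ x, ZFSet.IsTransitive y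

/-- A transitive class of sets. -/
def TransClass (M : Set ZFSet) : Prop := ∀ x ∈ M, ∀ y, y ∈ x → y ∈ M

/-- `j` is an elementary embedding of `V` into the class `M`. -/
structure ElemEmbV (M : Set ZFSet) (j : ZFSet → ZFSet) : Prop where
  maps : ∀ x, j x ∈ M
  elem : ∀ {k : ℕ} (φ : LSet.BoundedFormula Empty k) (xs : Fin k → ZFSet),
    SatV φ xs ↔ SatIn M φ (fun i => ⟨j (xs i), maps (xs i)⟩)

/-- `j` is an elementary embedding of the class `S` into the class `T`. -/
structure ElemEmbBetween (S T : Set ZFSet) (j : ZFSet → ZFSet) : Prop where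
  maps : ∀ x ∈ S, j x ∈ T
  elem : ∀ {k : ℕ} (φ : LSet.BoundedFormula Empty k) (xs : Fin k → ZFSet) (h : ∀ i, xs i ∈ S),
    SatIn S φ (fun i => ⟨xs i, h i⟩) ↔ SatIn T φ (fun i => ⟨j (xs i), maps _ (h i)⟩)

/-- `κ` is the critical point of `j`: `j` fixes all ordinals `< κ` and moves `κ`. -/
def IsCritPt (j : ZFSet → ZFSet) (κ : ZFSet) : Prop :=
  ZFOrd κ ∧ (∀ x, x ∈ κ → j x = x) ∧ j κ ≠ κ

/-- An ultrafilter on (all subsets of) the set `base`. -/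
structure ZFUltra (base : ZFSet) where
  sets : Set ZFSet
  sub : ∀ X ∈ sets, X ⊆ base
  base_mem : base ∈ sets
  empty_not_mem : (∅ : ZFSet) ∉ sets
  upward : ∀ X ∈ sets, ∀ Y, Y ⊆ base → X ⊆ Y → Y ∈ sets
  ultra : ∀ X, X ⊆ base → (X ∈ sets ∨ ZFSet.sep (fun y => y ∉ X) base ∈ sets)

/-- `κ`-completeness: any family of fewer than `|κ|` many members has its
intersection (with the base) in the ultrafilter. -/
def ZFUltra.Complete {b : ZFSet} (κ : ZFSet) (U : ZFUltra b) : Prop :=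
  ∀ F : Set ZFSet, F ⊆ U.sets → Cardinal.mk F < Cardinal.mk κ.toSet →
    ZFSet.sep (fun x => ∀ X ∈ F, x ∈ X) b ∈ U.sets

/-- Nonprincipality: the complement of every singleton is in the ultrafilter. -/
def ZFUltra.Nonprincipal {b : ZFSet} (U : ZFUltra b) : Prop :=
  ∀ x, ZFSet.sep (fun y => y ≠ x) b ∈ U.sets

/-- Normality for an ultrafilter on an ordinal `κ`: closure under diagonal
intersections. -/
def ZFUltra.NormalOn (κ : ZFSet) (U : ZFUltra κ) : Prop :=
  ∀ A : ZFSet → ZFSet, (∀ α ∈ κ, A α ∈ U.sets) →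
    ZFSet.sep (fun α => ∀ β ∈ α, α ∈ A β) κ ∈ U.sets

/-- `P_κ(γ)`: the set of subsets of `γ` of cardinality `< |κ|`. -/
noncomputable def Pkappa (κ γ : ZFSet) : ZFSet :=
  ZFSet.sep (fun x => Cardinal.mk x.toSet < Cardinal.mk κ.toSet) (ZFSet.powerset γ)

/-- Fineness for an ultrafilter on `P_κ(γ)`. -/
def ZFUltra.Fine (κ γ : ZFSet) (U : ZFUltra (Pkappa κ γ)) : Prop :=
  ∀ a ∈ γ, ZFSet.sep (fun x => a ∈ x) (Pkappa κ γ) ∈ U.sets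

/-- Normality for an ultrafilter on `P_κ(γ)`: closure under diagonal intersections. -/
def ZFUltra.NormalP (κ γ : ZFSet) (U : ZFUltra (Pkappa κ γ)) : Prop :=
  ∀ A : ZFSet → ZFSet, (∀ a ∈ γ, A a ∈ U.sets) →
    ZFSet.sep (fun x => ∀ a ∈ x, x ∈ A a) (Pkappa κ γ) ∈ U.sets

/-- `κ` is `γ`-supercompact: there is a `κ`-complete fine normal ultrafilter on `P_κ(γ)`. -/
def GammaSupercompact (κ γ : ZFSet) : Prop :=
  ∃ U : ZFUltra (Pkappa κ γ), U.Complete κ ∧ U.Fine κ γ ∧ U.NormalP κ γ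

/-- `κ` is supercompact. -/
def Supercompact (κ : ZFSet) : Prop :=
  ZFOrd κ ∧ ∀ γ : ZFSet, ZFOrd γ → GammaSupercompact κ γ

/-- `κ` is measurable: it carries a `κ`-complete nonprincipal ultrafilter. -/
def ZFMeasurable (κ : ZFSet) : Prop :=
  ZFOrd κ ∧ ∃ U : ZFUltra κ, U.Complete κ ∧ U.Nonprincipal

/-- `κ` is `λ`-strong. -/
def LambdaStrong (κ : ZFSet) (lam : Ordinal) : Prop :=
  ∃ (M : Set ZFSet) (j : ZFSet → ZFSet), TransClass M ∧ ElemEmbV M j ∧ IsCritPt j κ ∧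
    lam < (j κ).rank ∧ (∀ x, x.rank < lam → x ∈ M)

/-- `κ` is `λ`-`C⁽ⁿ⁾`-strong. -/
def LambdaCnStrong (n : ℕ) (κ : ZFSet) (lam : Ordinal) : Prop :=
  ∃ (M : Set ZFSet) (j : ZFSet → ZFSet), TransClass M ∧ ElemEmbV M j ∧ IsCritPt j κ ∧
    lam < (j κ).rank ∧ (∀ x, x.rank < lam → x ∈ M) ∧ (j κ).rank ∈ Cclass n

/-- `κ` is superstrong. -/
def Superstrong (κ : ZFSet) : Prop :=
  ∃ (M : Set ZFSet) (j : ZFSet → ZFSet), TransClass M ∧ ElemEmbV M j ∧ IsCritPt j κ ∧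
    (∀ x, x.rank < (j κ).rank → x ∈ M)

/-- `κ` is `C⁽ⁿ⁾`-superstrong. -/
def CnSuperstrong (n : ℕ) (κ : ZFSet) : Prop :=
  ∃ (M : Set ZFSet) (j : ZFSet → ZFSet), TransClass M ∧ ElemEmbV M j ∧ IsCritPt j κ ∧
    (∀ x, x.rank < (j κ).rank → x ∈ M) ∧ (j κ).rank ∈ Cclass n

/-- `κ` is `λ`-`C⁽ⁿ⁾`-extendible. -/
def LamCnExtendible (n : ℕ) (κ : ZFSet) (lam : Ordinal) : Prop :=
  ∃ (μ : Ordinal) (j : ZFSet → ZFSet), ElemEmbBetween (Vset lam) (Vset μ) j ∧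
    IsCritPt j κ ∧ lam < (j κ).rank ∧ (j κ).rank ∈ Cclass n

/-- `κ` is `C⁽ⁿ⁾`-extendible. -/
def CnExtendible (n : ℕ) (κ : ZFSet) : Prop :=
  ∀ lam : Ordinal, κ.rank < lam → LamCnExtendible n κ lam

/-- `κ` is extendible. -/
def Extendible (κ : ZFSet) : Prop :=
  ∀ lam : Ordinal, κ.rank < lam →
    ∃ (μ : Ordinal) (j : ZFSet → ZFSet), ElemEmbBetween (Vset lam) (Vset μ) j ∧
      IsCritPt j κ ∧ lam < (j κ).rank

open FirstOrder Language BoundedFormula in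
theorem snoc_comp_succ {M : Type*} {k : ℕ} (xs : Fin (k+1) → M) (a : M) :
    (Fin.snoc xs a : Fin (k+2) → M) ∘ Fin.succ = Fin.snoc (xs ∘ Fin.succ) a := by
  funext i
  refine Fin.lastCases ?_ (fun j => ?_) i
  · rw [Function.comp_apply, Fin.succ_last, Fin.snoc_last, Fin.snoc_last]
  · rw [Function.comp_apply, Fin.succ_castSucc, Fin.snoc_castSucc, Fin.snoc_castSucc,
      Function.comp_apply]

open FirstOrder Language BoundedFormula in
mutual
theorem shiftSigma : ∀ {n k : ℕ} {φ : LSet.BoundedFormula Empty k}, IsSigmaFml n φ →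
    ∃ ψ : LSet.BoundedFormula Empty (k+1), IsSigmaFml n ψ ∧
      ∀ (M : Type*) [LSet.Structure M] (v : Empty → M) (xs : Fin (k+1) → M),
        ψ.Realize v xs ↔ φ.Realize v (xs ∘ Fin.succ)
  | _, k, φ, .of_qf h => ⟨φ.liftAt 1 0, .of_qf h.liftAt, fun M _ v xs => by
      rw [realize_liftAt_one (Nat.zero_le k)]
      exact iff_of_eq (congrArg _ (congrArg _ (funext fun i => by simp)))⟩
  | _, _, _, .of_pi h => let ⟨ψ, h1, h2⟩ := shiftPi h; ⟨ψ, .of_pi h1, h2⟩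
  | _, k, _, .ex h =>
      let ⟨ψ, h1, h2⟩ := shiftSigma h
      ⟨ψ.ex, .ex h1, fun M _ v xs => by
        rw [realize_ex, realize_ex]
        exact exists_congr fun a => (h2 M v (Fin.snoc xs a)).trans
          (iff_of_eq (congrArg _ (snoc_comp_succ xs a)))⟩
termination_by n k φ _ => (n, sizeOf φ)
decreasing_by
  · exact Prod.Lex.left _ _ (Nat.lt_succ_self _)
  · exact Prod.Lex.right _ (by simp [BoundedFormula.ex, BoundedFormula.not]; try omega)
theorem shiftPi : ∀ {n k : ℕ} {φ : LSet.BoundedFormula Empty k}, IsPiFml n φ →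
    ∃ ψ : LSet.BoundedFormula Empty (k+1), IsPiFml n ψ ∧
      ∀ (M : Type*) [LSet.Structure M] (v : Empty → M) (xs : Fin (k+1) → M),
        ψ.Realize v xs ↔ φ.Realize v (xs ∘ Fin.succ)
  | _, k, φ, .of_qf h => ⟨φ.liftAt 1 0, .of_qf h.liftAt, fun M _ v xs => by
      rw [realize_liftAt_one (Nat.zero_le k)]
      exact iff_of_eq (congrArg _ (congrArg _ (funext fun i => by simp)))⟩
  | _, _, _, .of_sigma h => let ⟨ψ, h1, h2⟩ := shiftSigma h; ⟨ψ, .of_sigma h1, h2⟩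
  | _, k, _, .all h =>
      let ⟨ψ, h1, h2⟩ := shiftPi h
      ⟨ψ.all, .all h1, fun M _ v xs => by
        rw [realize_all, realize_all]
        exact forall_congr' fun a => (h2 M v (Fin.snoc xs a)).trans
          (iff_of_eq (congrArg _ (snoc_comp_succ xs a)))⟩
termination_by n k φ _ => (n, sizeOf φ)
decreasing_by
  · exact Prod.Lex.left _ _ (Nat.lt_succ_self _)
  · exact Prod.Lex.right _ (by simp [BoundedFormula.ex, BoundedFormula.not]; try omega)
end

open FirstOrder Language BoundedFormula in
mutual
theorem infSigma : ∀ {n k : ℕ} {φ : LSet.BoundedFormula Empty k}, IsSigmaFml n φ →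
    ∀ {χ : LSet.BoundedFormula Empty k}, χ.IsQF →
    ∃ ψ : LSet.BoundedFormula Empty k, IsSigmaFml n ψ ∧
      ∀ (M : Type*) [LSet.Structure M] [Nonempty M] (v : Empty → M) (xs : Fin k → M),
        ψ.Realize v xs ↔ (φ.Realize v xs ∧ χ.Realize v xs)
  | _, _, φ, .of_qf h, χ, hχ => ⟨φ ⊓ χ, .of_qf (h.inf hχ), fun M _ _ v xs => realize_inf⟩
  | _, _, _, .of_pi h, _, hχ => let ⟨ψ, h1, h2⟩ := infPi h hχ; ⟨ψ, .of_pi h1, h2⟩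
  | _, k, _, .ex h, χ, hχ =>
      let ⟨ψ, h1, h2⟩ := infSigma h (hχ.liftAt (k := 1) (m := k))
      ⟨ψ.ex, .ex h1, fun M _ _ v xs => by
        rw [realize_ex, realize_ex]
        constructor
        · rintro ⟨a, ha⟩
          rw [h2] at ha
          obtain ⟨h3, h4⟩ := ha
          rw [realize_liftAt_one_self, Fin.snoc_comp_castSucc] at h4
          exact ⟨⟨a, h3⟩, h4⟩
        · rintro ⟨⟨a, h3⟩, h4⟩
          refine ⟨a, (h2 M v _).mpr ⟨h3, ?_⟩⟩
          rw [realize_liftAt_one_self, Fin.snoc_comp_castSucc]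
          exact h4⟩
termination_by n k φ _ _ _ => (n, sizeOf φ)
decreasing_by
  · exact Prod.Lex.left _ _ (Nat.lt_succ_self _)
  · exact Prod.Lex.right _ (by simp [BoundedFormula.ex, BoundedFormula.not]; try omega)
theorem infPi : ∀ {n k : ℕ} {φ : LSet.BoundedFormula Empty k}, IsPiFml n φ →
    ∀ {χ : LSet.BoundedFormula Empty k}, χ.IsQF →
    ∃ ψ : LSet.BoundedFormula Empty k, IsPiFml n ψ ∧
      ∀ (M : Type*) [LSet.Structure M] [Nonempty M] (v : Empty → M) (xs : Fin k → M),
        ψ.Realize v xs ↔ (φ.Realize v xs ∧ χ.Realize v xs)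
  | _, _, φ, .of_qf h, χ, hχ => ⟨φ ⊓ χ, .of_qf (h.inf hχ), fun M _ _ v xs => realize_inf⟩
  | _, _, _, .of_sigma h, _, hχ => let ⟨ψ, h1, h2⟩ := infSigma h hχ; ⟨ψ, .of_sigma h1, h2⟩
  | _, k, _, .all h, χ, hχ =>
      let ⟨ψ, h1, h2⟩ := infPi h (hχ.liftAt (k := 1) (m := k))
      ⟨ψ.all, .all h1, fun M _ _ v xs => by
        rw [realize_all, realize_all]
        constructor
        · intro ha
          have h4 := fun a => (h2 M v (Fin.snoc xs a)).mp (ha a)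
          refine ⟨fun a => (h4 a).1, ?_⟩
          obtain ⟨a⟩ := ‹Nonempty M›
          have := (h4 a).2
          rwa [realize_liftAt_one_self, Fin.snoc_comp_castSucc] at this
        · rintro ⟨h3, h4⟩ a
          refine (h2 M v _).mpr ⟨h3 a, ?_⟩
          rw [realize_liftAt_one_self, Fin.snoc_comp_castSucc]
          exact h4⟩
termination_by n k φ _ _ _ => (n, sizeOf φ)
decreasing_by
  · exact Prod.Lex.left _ _ (Nat.lt_succ_self _)
  · exact Prod.Lex.right _ (by simp [BoundedFormula.ex, BoundedFormula.not]; try omega)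
end

def memRel : LSet.Relations 2 := ()

def memAtom : LSet.BoundedFormula Empty 2 :=
  FirstOrder.Language.BoundedFormula.rel memRel ![.var (.inr 0), .var (.inr 1)]

theorem memAtom_qf : memAtom.IsQF :=
  (FirstOrder.Language.BoundedFormula.IsAtomic.rel _ _).isQF

open FirstOrder Language BoundedFormula in
theorem realize_memAtom {M : Type*} [LSet.Structure M] (v : Empty → M) (ys : Fin 2 → M) :
    memAtom.Realize v ys ↔ Structure.RelMap (L := LSet) memRel ![ys 0, ys 1] := by
  have h0 : memAtom.Realize v ys ↔ Structure.RelMap (L := LSet) memRel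
      (fun i => Term.realize (Sum.elim v ys)
        ((![.var (.inr 0), .var (.inr 1)] : Fin 2 → LSet.Term (Empty ⊕ Fin 2)) i)) := Iff.rfl
  rw [h0]
  refine iff_of_eq (congrArg _ (funext fun i => ?_))
  fin_cases i <;> rfl

theorem relMap_V (ys : Fin 2 → ZFSet) :
    FirstOrder.Language.Structure.RelMap (L := LSet) memRel ys ↔ ys 0 ∈ ys 1 := Iff.rfl

theorem relMap_S {S : Set ZFSet} (ys : Fin 2 → S) :
    FirstOrder.Language.Structure.RelMap (L := LSet) memRel ys ↔ (ys 0 : ZFSet) ∈ (ys 1 : ZFSet) :=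
  Iff.rfl

theorem isSigma_isPi_of_qf {k : ℕ} {φ : LSet.BoundedFormula Empty k} (h : φ.IsQF) :
    ∀ n, IsSigmaFml n φ ∧ IsPiFml n φ
  | 0 => ⟨.of_qf h, .of_qf h⟩
  | n+1 => ⟨.of_pi (isSigma_isPi_of_qf h n).2, .of_sigma (isSigma_isPi_of_qf h n).1⟩

open FirstOrder Language BoundedFormula in
theorem exists_psi {m : ℕ} {φ : LSet.BoundedFormula Empty 1} (hφ : IsSigmaFml (m+1) φ) :
    ∃ ψ : LSet.BoundedFormula Empty 1, IsSigmaFml (m+1) ψ ∧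
      ∀ (M : Type*) [LSet.Structure M] [Nonempty M] (v : Empty → M) (xs : Fin 1 → M),
        ψ.Realize v xs ↔ ∃ b : M, φ.Realize v ![b] ∧
          Structure.RelMap (L := LSet) memRel ![xs 0, b] := by
  obtain ⟨φ', hS1, hr1⟩ := shiftSigma hφ
  obtain ⟨ψ₂, hS2, hr2⟩ := infSigma hS1 memAtom_qf
  refine ⟨ψ₂.ex, .ex hS2, fun M _ _ v xs => ?_⟩
  rw [realize_ex]
  refine exists_congr fun b => ?_
  rw [hr2, hr1, realize_memAtom]
  have e1 : (Fin.snoc xs b ∘ Fin.succ : Fin 1 → M) = ![b] := by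
    funext i; fin_cases i; simp [Fin.snoc]
  have e2 : (Fin.snoc xs b : Fin 2 → M) 0 = xs 0 := by
    simp [Fin.snoc]
  have e3 : (Fin.snoc xs b : Fin 2 → M) 1 = b := by simp [Fin.snoc]
  rw [e1, e2, e3]

universe w

noncomputable def vonN : Ordinal.{w} → ZFSet.{w}
  | o => ZFSet.range fun i : o.ToType => vonN ((Ordinal.ToType.mk (o := o)).symm i).1
termination_by o => o
decreasing_by exact ((Ordinal.ToType.mk (o := o)).symm i).2

theorem mem_vonN {x : ZFSet.{w}} {o : Ordinal.{w}} : x ∈ vonN o ↔ ∃ β < o, x = vonN β := by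
  rw [vonN, ZFSet.mem_range]
  constructor
  · rintro ⟨i, rfl⟩
    exact ⟨_, ((Ordinal.ToType.mk (o := o)).symm i).2, rfl⟩
  · rintro ⟨β, hβ, rfl⟩
    refine ⟨Ordinal.ToType.mk (o := o) ⟨β, hβ⟩, ?_⟩
    simp

theorem vonN_mem_vonN {β o : Ordinal.{w}} (h : β < o) : vonN β ∈ vonN o :=
  mem_vonN.mpr ⟨β, h, rfl⟩

theorem isTransitive_vonN (o : Ordinal.{w}) : (vonN o).IsTransitive := by
  intro y hy z hz
  obtain ⟨β, hβ, rfl⟩ := mem_vonN.mp hy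
  obtain ⟨γ, hγ, rfl⟩ := mem_vonN.mp hz
  exact vonN_mem_vonN (hγ.trans hβ)

theorem zford_vonN (o : Ordinal.{w}) : ZFOrd (vonN o) := by
  refine ⟨isTransitive_vonN o, fun y hy => ?_⟩
  obtain ⟨β, hβ, rfl⟩ := mem_vonN.mp hy
  exact isTransitive_vonN β

theorem rank_vonN : ∀ o : Ordinal.{w}, (vonN o).rank = o := by
  intro o
  induction o using Ordinal.induction with
  | h o ih =>
    apply le_antisymm
    · rw [ZFSet.rank_le_iff]
      intro y hy
      obtain ⟨β, hβ, rfl⟩ := mem_vonN.mp hy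
      rwa [ih β hβ]
    · by_contra h
      push_neg at h
      have h1 := ZFSet.rank_lt_of_mem (vonN_mem_vonN h)
      rw [ih _ h] at h1
      exact lt_irrefl _ h1

/-- Every Σₙ-definable (parameter-free) club proper class of ordinals contains `C⁽ⁿ⁾`. -/
theorem stmt4 (n : ℕ) (hn : 1 ≤ n) (C : Set Ordinal)
    (hclosed : ∀ s : Set Ordinal, s ⊆ C → s.Nonempty → BddAbove s → sSup s ∈ C)
    (hunbdd : ∀ α : Ordinal, ∃ β ∈ C, α < β)
    (φ : LSet.BoundedFormula Empty 1) (hφ : IsSigmaFml n φ)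
    (hdef : ∀ x : ZFSet, SatV φ ![x] ↔ (ZFOrd x ∧ x.rank ∈ C)) :
    ∀ α ∈ Cclass n, α ∈ C := by
  intro α hα
  obtain ⟨m, rfl⟩ : ∃ m, n = m + 1 := ⟨n - 1, (Nat.succ_pred_eq_of_pos hn).symm⟩
  have hα' : SigmaElementary (m+1) (Vset α) := hα
  haveI : Nonempty ZFSet := ⟨∅⟩
  -- Vset α is nonempty
  have hexphi : IsSigmaFml (m+1) φ.ex := .ex hφ
  have hVne : Nonempty (Vset α) := by
    obtain ⟨β₀, hβ₀C, _⟩ := hunbdd 0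
    have hV : SatV φ.ex (fun i => ((Fin.elim0 i : (Vset α)) : ZFSet)) := by
      unfold SatV
      rw [FirstOrder.Language.BoundedFormula.realize_ex]
      refine ⟨vonN β₀, ?_⟩
      have hb := (hdef (vonN β₀)).mpr ⟨zford_vonN β₀, by rw [rank_vonN]; exact hβ₀C⟩
      unfold SatV at hb
      convert hb using 2
      funext i
      fin_cases i
      simp [Fin.snoc]
    have h2 := (hα' φ.ex hexphi Fin.elim0).mpr hV
    unfold SatIn at h2
    rw [FirstOrder.Language.BoundedFormula.realize_ex] at h2
    obtain ⟨a, -⟩ := h2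
    exact ⟨a⟩
  obtain ⟨ψ, hψS, hψr⟩ := exists_psi hφ
  -- key claim: C ∩ α is unbounded in α
  have key : ∀ ξ : Ordinal, ξ < α → ∃ γ, γ ∈ C ∧ ξ < γ ∧ γ < α := by
    intro ξ hξ
    have hx : vonN ξ ∈ Vset α := by
      show (vonN ξ).rank < α
      rw [rank_vonN]; exact hξ
    have hSatV : SatV ψ ![vonN ξ] := by
      unfold SatV
      rw [hψr ZFSet _ _]
      obtain ⟨β, hβC, hξβ⟩ := hunbdd ξ
      refine ⟨vonN β, ?_, ?_⟩
      · exact (hdef (vonN β)).mpr ⟨zford_vonN β, by rw [rank_vonN]; exact hβC⟩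
      · rw [relMap_V]
        show (vonN ξ) ∈ (vonN β)
        exact vonN_mem_vonN hξβ
    have hcast : (fun i => ((![(⟨vonN ξ, hx⟩ : Vset α)] : Fin 1 → Vset α) i : ZFSet)) = ![vonN ξ] := by
      funext i; fin_cases i; rfl
    have hSatIn := (hα' ψ hψS ![⟨vonN ξ, hx⟩]).mpr (by rw [hcast]; exact hSatV)
    unfold SatIn at hSatIn
    haveI := hVne
    rw [hψr (Vset α) _ _] at hSatIn
    obtain ⟨b, hb1, hb2⟩ := hSatIn
    have hb3 : SatV φ ![(b : ZFSet)] := by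
      have hcast2 : (fun i => ((![b] : Fin 1 → Vset α) i : ZFSet)) = ![(b : ZFSet)] := by
        funext i; fin_cases i; rfl
      have h4 := (hα' φ hφ ![b]).mp hb1
      rwa [hcast2] at h4
    obtain ⟨hOrd, hrC⟩ := (hdef b).mp hb3
    have hmem : vonN ξ ∈ (b : ZFSet) := by
      rw [relMap_S] at hb2
      simpa using hb2
    have h5 : ξ < (b : ZFSet).rank := by
      have := ZFSet.rank_lt_of_mem hmem
      rwa [rank_vonN] at this
    exact ⟨(b : ZFSet).rank, hrC, h5, b.2⟩
  -- closure argument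
  have hαpos : 0 < α := by
    obtain ⟨a⟩ := hVne
    exact lt_of_le_of_lt zero_le a.2
  set s : Set Ordinal := C ∩ Set.Iio α with hs
  obtain ⟨γ0, hγ0C, _, hγ0α⟩ := key 0 hαpos
  have hne : s.Nonempty := ⟨γ0, hγ0C, hγ0α⟩
  have hbdd : BddAbove s := ⟨α, fun γ hγ => le_of_lt hγ.2⟩
  have hsup : sSup s = α := by
    apply le_antisymm
    · exact csSup_le hne (fun γ hγ => le_of_lt hγ.2)
    · by_contra h
      push_neg at h
      obtain ⟨γ, hγC, hlt, hγα⟩ := key (sSup s) h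
      exact absurd (le_csSup hbdd ⟨hγC, hγα⟩) (not_le.mpr hlt)
  have hfin := hclosed s Set.inter_subset_left hne hbdd
  rwa [hsup] at hfin
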